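/- arXiv:1705.03872 — 2 statements merged into one kernel-verified Lean document; each statement's English description precedes it below -/
import Mathlib

section
/- The first 𝒩 eigenvectors of the correlation operator solve the POD minimization problem: among all W-orthonormal families ψ_1,...,ψ_𝒩 in ℝ^N, the eigenvectors of R corresponding to the 𝒩 largest eigenvalues minimize Σ_{k∈K} ‖a^k − Σ_{i=1}^{𝒩} ⟨a^k, ψ_i⟩_W ψ_i‖_W². -/
open Matrix Finset

lemma pod_sum_dp {N : ℕ} {ι : Type*} (s : Finset ι) (f : ι → Fin N → ℝ) (v : Fin N → ℝ) :
    (∑ i ∈ s, f i) ⬝ᵥ v = ∑ i ∈ s, f i ⬝ᵥ v := by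
  classical
  induction s using Finset.induction with
  | empty => simp
  | insert _ _ h ih => simp [Finset.sum_insert h, add_dotProduct, ih]

lemma pod_mulVec_sum {N M : ℕ} {ι : Type*} (s : Finset ι) (A : Matrix (Fin M) (Fin N) ℝ)
    (f : ι → Fin N → ℝ) : A *ᵥ (∑ i ∈ s, f i) = ∑ i ∈ s, A *ᵥ f i := by
  classical
  induction s using Finset.induction with
  | empty => simp
  | insert _ _ h ih => simp [Finset.sum_insert h, Matrix.mulVec_add, ih]

lemma pod_symm {N : ℕ} {W : Matrix (Fin N) (Fin N) ℝ} (hs : Wᵀ = W) (u v : Fin N → ℝ) :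
    u ⬝ᵥ W *ᵥ v = v ⬝ᵥ W *ᵥ u := by
  rw [Matrix.dotProduct_mulVec, ← Matrix.mulVec_transpose, hs, dotProduct_comm]

lemma pod_expand {N n : ℕ} {W : Matrix (Fin N) (Fin N) ℝ} (hs : Wᵀ = W)
    (φ : Fin n → Fin N → ℝ)
    (hφ : ∀ i j, φ i ⬝ᵥ W *ᵥ φ j = if i = j then (1 : ℝ) else 0) (v : Fin N → ℝ) :
    (v - ∑ i : Fin n, (v ⬝ᵥ W *ᵥ φ i) • φ i) ⬝ᵥ W *ᵥ (v - ∑ i : Fin n, (v ⬝ᵥ W *ᵥ φ i) • φ i)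
      = v ⬝ᵥ W *ᵥ v - ∑ i : Fin n, (v ⬝ᵥ W *ᵥ φ i) ^ 2 := by
  set c : Fin n → ℝ := fun i => v ⬝ᵥ W *ᵥ φ i with hc
  set S : Fin N → ℝ := ∑ i : Fin n, c i • φ i with hS
  have hSl : ∀ u : Fin N → ℝ, S ⬝ᵥ W *ᵥ u = ∑ i : Fin n, c i * (φ i ⬝ᵥ W *ᵥ u) := by
    intro u
    rw [hS, pod_sum_dp]
    simp [smul_dotProduct, smul_eq_mul]
  have hSv : S ⬝ᵥ W *ᵥ v = ∑ i : Fin n, c i ^ 2 := by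
    rw [hSl]
    refine Finset.sum_congr rfl fun i _ => ?_
    rw [pod_symm hs (φ i) v, sq]
  have hSS : S ⬝ᵥ W *ᵥ S = ∑ i : Fin n, c i ^ 2 := by
    rw [hSl]
    refine Finset.sum_congr rfl fun i _ => ?_
    rw [pod_symm hs (φ i) S, hSl]
    have : ∑ j : Fin n, c j * (φ j ⬝ᵥ W *ᵥ φ i) = c i := by
      rw [Finset.sum_eq_single i]
      · simp [hφ]
      · intro j _ hj; simp [hφ, hj]
      · simp
    rw [this]; ring
  have hvS : v ⬝ᵥ W *ᵥ S = ∑ i : Fin n, c i ^ 2 := by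
    rw [pod_symm hs v S, hSv]
  rw [sub_dotProduct, Matrix.mulVec_sub, dotProduct_sub, dotProduct_sub, hvS, hSv, hSS]
  ring

lemma pod_bessel {N n : ℕ} {W : Matrix (Fin N) (Fin N) ℝ} (hW : W.PosDef)
    (φ : Fin n → Fin N → ℝ)
    (hφ : ∀ i j, φ i ⬝ᵥ W *ᵥ φ j = if i = j then (1 : ℝ) else 0) (v : Fin N → ℝ) :
    ∑ i : Fin n, (v ⬝ᵥ W *ᵥ φ i) ^ 2 ≤ v ⬝ᵥ W *ᵥ v := by
  have hs : Wᵀ = W := by simpa [Matrix.IsHermitian] using hW.1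
  have h := pod_expand hs φ hφ v
  set e : Fin N → ℝ := v - ∑ i : Fin n, (v ⬝ᵥ W *ᵥ φ i) • φ i with he
  have hnn : 0 ≤ e ⬝ᵥ W *ᵥ e := by
    have := hW.posSemidef.dotProduct_mulVec_nonneg e
    simpa using this
  linarith [h ▸ hnn]

lemma pod_complete {N : ℕ} {W : Matrix (Fin N) (Fin N) ℝ}
    (psi : Fin N → Fin N → ℝ)
    (horth : ∀ i j, psi i ⬝ᵥ W *ᵥ psi j = if i = j then (1 : ℝ) else 0)
    (v : Fin N → ℝ) :
    ∑ i : Fin N, (psi i ⬝ᵥ W *ᵥ v) • psi i = v := by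
  classical
  set P : Matrix (Fin N) (Fin N) ℝ := Matrix.of (fun i j => psi j i) with hP
  have hentry : ∀ (M : Matrix (Fin N) (Fin N) ℝ) (i : Fin N) (u : Fin N → ℝ),
      ((Pᵀ * M) *ᵥ u) i = psi i ⬝ᵥ M *ᵥ u := by
    intro M i u
    simp only [Matrix.mulVec, Matrix.mul_apply, dotProduct, Matrix.transpose_apply, hP,
      Matrix.of_apply, Finset.sum_mul, Finset.mul_sum, mul_assoc]
    exact Finset.sum_comm ..

  have h1 : (Pᵀ * W) * P = 1 := by
    ext i j
    have h0 := hentry W i (psi j)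
    have h2 : ((Pᵀ * W) *ᵥ psi j) i = ((Pᵀ * W) * P) i j := by
      simp [Matrix.mulVec, Matrix.mul_apply, dotProduct, hP]
    rw [h2] at h0
    rw [h0, horth i j]
    simp [Matrix.one_apply, eq_comm]
  have h2 : P * (Pᵀ * W) = 1 := mul_eq_one_comm.mpr h1
  have h3 : P *ᵥ ((Pᵀ * W) *ᵥ v) = v := by
    rw [Matrix.mulVec_mulVec, h2, Matrix.one_mulVec]
  set u : Fin N → ℝ := (Pᵀ * W) *ᵥ v with hu
  have hu' : ∀ i, psi i ⬝ᵥ W *ᵥ v = u i := fun i => (hentry W i v).symm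
  simp only [hu']
  rw [← h3]
  funext j
  simp [Matrix.mulVec, dotProduct, hP, mul_comm]

lemma pod_q {N m : ℕ} {W : Matrix (Fin N) (Fin N) ℝ} (hs : Wᵀ = W)
    (a : Fin m → Fin N → ℝ) (A : Matrix (Fin N) (Fin m) ℝ)
    (hA : A = Matrix.of fun i k => a k i) (v : Fin N → ℝ) :
    ∑ k : Fin m, (a k ⬝ᵥ W *ᵥ v) ^ 2 = v ⬝ᵥ W *ᵥ ((A * Aᵀ * W) *ᵥ v) := by
  have hAt : ∀ w : Fin N → ℝ, Aᵀ *ᵥ w = fun k => a k ⬝ᵥ w := by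
    intro w; funext k; simp [hA, Matrix.mulVec, dotProduct]
  rw [pod_symm hs, ← Matrix.mulVec_mulVec, ← Matrix.mulVec_mulVec,
    dotProduct_comm, Matrix.dotProduct_mulVec, ← Matrix.mulVec_transpose, hAt]
  simp [dotProduct, sq]

lemma pod_majorize {N n : ℕ} (hnN : n ≤ N) (lam : Fin N → ℝ) (hdec : Antitone lam)
    (t : Fin N → ℝ) (h0 : ∀ i, 0 ≤ t i) (h1 : ∀ i, t i ≤ 1)
    (hsum : ∑ i, t i = (n : ℝ)) :
    ∑ i, lam i * t i ≤ ∑ j : Fin n, lam (Fin.castLE hnN j) := by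
  classical
  rcases eq_or_lt_of_le hnN with heq | hlt
  · have hall : ∀ i, t i = 1 := by
      have hz : ∑ i : Fin N, (1 - t i) = 0 := by
        rw [Finset.sum_sub_distrib, hsum]
        simp [heq]
      have hmem := (Finset.sum_eq_zero_iff_of_nonneg
        (fun i _ => by linarith [h1 i])).mp hz
      intro i
      have := hmem i (Finset.mem_univ i)
      linarith
    subst heq
    have hid : ∀ j : Fin n, Fin.castLE hnN j = j := fun j => Fin.ext rfl
    simp only [hid, hall, mul_one, le_refl]
  · set c : ℝ := lam ⟨n, hlt⟩ with hc
    set s : Finset (Fin N) := Finset.univ.map (Fin.castLEEmb hnN) with hs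
    have hmem : ∀ i : Fin N, i ∈ s ↔ (i : ℕ) < n := by
      intro i
      simp only [hs, Finset.mem_map, Finset.mem_univ, true_and, Fin.castLEEmb_apply]
      constructor
      · rintro ⟨j, rfl⟩; exact j.2
      · intro h; exact ⟨⟨i, h⟩, Fin.ext rfl⟩
    have hsum_s : ∑ j : Fin n, (lam (Fin.castLE hnN j) - c) = ∑ i ∈ s, (lam i - c) := by
      rw [hs, Finset.sum_map]
      rfl
    have hupper : ∑ i ∈ s, (lam i - c) * t i ≤ ∑ i ∈ s, (lam i - c) := by
      refine Finset.sum_le_sum fun i hi => ?_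
      have hlam : c ≤ lam i := by
        refine hdec ?_
        exact Fin.mk_le_mk.mpr (le_of_lt ((hmem i).mp hi))
      nlinarith [h1 i, h0 i]
    have hlower : ∑ i ∈ sᶜ, (lam i - c) * t i ≤ 0 := by
      refine Finset.sum_nonpos fun i hi => ?_
      have : ¬ (i : ℕ) < n := by
        intro h
        exact (Finset.mem_compl.mp hi) ((hmem i).mpr h)
      have hlam : lam i ≤ c := hdec (Fin.mk_le_mk.mpr (le_of_not_gt this))
      nlinarith [h0 i]
    have hkey : ∑ i, (lam i - c) * t i ≤ ∑ j : Fin n, (lam (Fin.castLE hnN j) - c) := by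
      rw [hsum_s, ← Finset.sum_add_sum_compl s (fun i => (lam i - c) * t i)]
      linarith
    have e1 : ∑ i, lam i * t i = ∑ i, (lam i - c) * t i + c * (n : ℝ) := by
      rw [← hsum, Finset.mul_sum, ← Finset.sum_add_distrib]
      exact Finset.sum_congr rfl fun i _ => by ring
    have e2 : ∑ j : Fin n, lam (Fin.castLE hnN j)
        = ∑ j : Fin n, (lam (Fin.castLE hnN j) - c) + c * (n : ℝ) := by
      rw [Finset.sum_sub_distrib]
      simp [Finset.card_univ, mul_comm]
    rw [e1, e2]
    linarith

/-- The first 𝒩 eigenvectors of the correlation operator (for the 𝒩 largest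
eigenvalues) solve the POD minimization problem among all W-orthonormal families. -/
theorem pod_optimality
    (N m n : ℕ) (W : Matrix (Fin N) (Fin N) ℝ) (hW : W.PosDef)
    (a : Fin m → Fin N → ℝ)
    (A : Matrix (Fin N) (Fin m) ℝ) (hA : A = Matrix.of fun i k => a k i)
    (lam : Fin N → ℝ) (psi : Fin N → Fin N → ℝ)
    (hdec : Antitone lam)
    (heig : ∀ i, (A * Aᵀ * W) *ᵥ psi i = lam i • psi i)
    (horth : ∀ i j, psi i ⬝ᵥ W *ᵥ psi j = if i = j then (1 : ℝ) else 0)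
    (hnN : n ≤ N) (hn : n ≤ A.rank)
    (phi : Fin n → Fin N → ℝ)
    (hphi : ∀ i j, phi i ⬝ᵥ W *ᵥ phi j = if i = j then (1 : ℝ) else 0) :
    ∑ k : Fin m,
      (fun e => e ⬝ᵥ W *ᵥ e)
        (a k - ∑ i : Fin n, (a k ⬝ᵥ W *ᵥ psi (Fin.castLE hnN i)) • psi (Fin.castLE hnN i))
    ≤ ∑ k : Fin m,
      (fun e => e ⬝ᵥ W *ᵥ e)
        (a k - ∑ i : Fin n, (a k ⬝ᵥ W *ᵥ phi i) • phi i) := by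
  classical
  have hs : Wᵀ = W := by simpa [Matrix.IsHermitian] using hW.1
  -- orthonormality of the truncated psi family
  have hpsiC : ∀ i j : Fin n,
      psi (Fin.castLE hnN i) ⬝ᵥ W *ᵥ psi (Fin.castLE hnN j) = if i = j then (1 : ℝ) else 0 := by
    intro i j
    rw [horth]
    simp [Fin.castLE_inj]
  -- coefficients of phi in the psi basis
  set c : Fin n → Fin N → ℝ := fun j i => psi i ⬝ᵥ W *ᵥ phi j with hcdef
  have hexp : ∀ j : Fin n, ∑ i : Fin N, c j i • psi i = phi j :=
    fun j => pod_complete psi horth (phi j)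
  -- Rayleigh quotient of psi vectors
  have hqpsi : ∀ i : Fin N, ∑ k : Fin m, (a k ⬝ᵥ W *ᵥ psi i) ^ 2 = lam i := by
    intro i
    have hsym : ∀ k, a k ⬝ᵥ W *ᵥ psi i = psi i ⬝ᵥ W *ᵥ a k := fun k => pod_symm hs _ _
    rw [pod_q hs a A hA, heig i, Matrix.mulVec_smul, dotProduct_smul, horth i i]
    simp
  -- Rayleigh quotient of phi vectors
  have hqphi : ∀ j : Fin n,
      ∑ k : Fin m, (a k ⬝ᵥ W *ᵥ phi j) ^ 2 = ∑ i : Fin N, lam i * (c j i) ^ 2 := by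
    intro j
    have hR : (A * Aᵀ * W) *ᵥ phi j = ∑ i : Fin N, (lam i * c j i) • psi i := by
      conv_lhs => rw [← hexp j]
      rw [pod_mulVec_sum]
      refine Finset.sum_congr rfl fun i _ => ?_
      rw [Matrix.mulVec_smul, heig i, smul_smul, mul_comm]
    rw [pod_q hs a A hA, pod_symm hs, hR, pod_sum_dp]
    refine Finset.sum_congr rfl fun i _ => ?_
    rw [smul_dotProduct, smul_eq_mul]
    show lam i * c j i * c j i = lam i * c j i ^ 2
    ring
  -- the weights t i
  set t : Fin N → ℝ := fun i => ∑ j : Fin n, (c j i) ^ 2 with htdef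
  have ht0 : ∀ i, 0 ≤ t i := fun i => Finset.sum_nonneg fun j _ => sq_nonneg _
  have ht1 : ∀ i, t i ≤ 1 := by
    intro i
    have := pod_bessel hW phi hphi (psi i)
    rw [horth i i] at this
    simpa [htdef, hcdef, pod_symm hs (psi i)] using this
  have htsum : ∑ i, t i = (n : ℝ) := by
    have hone : ∀ j : Fin n, ∑ i : Fin N, (c j i) ^ 2 = 1 := by
      intro j
      have h1 : (∑ i : Fin N, c j i • psi i) ⬝ᵥ W *ᵥ phi j = 1 := by
        rw [hexp j, hphi j j]
        simp
      rw [pod_sum_dp] at h1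
      rw [← h1]
      refine Finset.sum_congr rfl fun i _ => ?_
      rw [smul_dotProduct, smul_eq_mul, sq]
    rw [htdef]
    rw [Finset.sum_comm]
    simp [hone]
  -- the majorization inequality
  have hmaj : ∑ i, lam i * t i ≤ ∑ j : Fin n, lam (Fin.castLE hnN j) :=
    pod_majorize hnN lam hdec t ht0 ht1 htsum
  -- rewrite both sides using pod_expand
  have hL : ∑ k : Fin m,
      (fun e => e ⬝ᵥ W *ᵥ e)
        (a k - ∑ i : Fin n, (a k ⬝ᵥ W *ᵥ psi (Fin.castLE hnN i)) • psi (Fin.castLE hnN i))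
      = ∑ k : Fin m, a k ⬝ᵥ W *ᵥ a k - ∑ j : Fin n, lam (Fin.castLE hnN j) := by
    have := fun k : Fin m => pod_expand hs (fun i : Fin n => psi (Fin.castLE hnN i)) hpsiC (a k)
    simp only [this]
    rw [Finset.sum_sub_distrib, Finset.sum_comm]
    congr 1
    exact Finset.sum_congr rfl fun j _ => hqpsi (Fin.castLE hnN j)
  have hRt : ∑ k : Fin m,
      (fun e => e ⬝ᵥ W *ᵥ e)
        (a k - ∑ i : Fin n, (a k ⬝ᵥ W *ᵥ phi i) • phi i)
      = ∑ k : Fin m, a k ⬝ᵥ W *ᵥ a k - ∑ i, lam i * t i := by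
    have := fun k : Fin m => pod_expand hs phi hphi (a k)
    simp only [this]
    rw [Finset.sum_sub_distrib, Finset.sum_comm]
    congr 1
    calc ∑ j : Fin n, ∑ k : Fin m, (a k ⬝ᵥ W *ᵥ phi j) ^ 2
        = ∑ j : Fin n, ∑ i : Fin N, lam i * (c j i) ^ 2 :=
          Finset.sum_congr rfl fun j _ => hqphi j
      _ = ∑ i : Fin N, ∑ j : Fin n, lam i * (c j i) ^ 2 := Finset.sum_comm ..
      _ = ∑ i, lam i * t i := by
          refine Finset.sum_congr rfl fun i _ => ?_
          rw [htdef, Finset.mul_sum]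
  rw [hL, hRt]
  linarith
end

section
/- Relative a posteriori error bound: under the assumptions of the absolute error bound, and if additionally ‖r‖_{W^{-1}}/α ≤ ‖a^𝒩‖_W/2 (i.e., a^𝒩 is a sufficiently good approximation), then ‖a − a^𝒩‖_W / ‖a‖_W ≤ 2 ‖r‖_{W^{-1}} / (α ‖a^𝒩‖_W). -/
open Matrix

section Aux

variable {N : ℕ}

lemma aux_dot_nonneg (u : Fin N → ℝ) : (0:ℝ) ≤ u ⬝ᵥ u :=
  Finset.sum_nonneg (fun i _ => mul_self_nonneg (u i))

/-- Cauchy–Schwarz for dot products of real vectors. -/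
lemma aux_cs (u v : Fin N → ℝ) :
    u ⬝ᵥ v ≤ Real.sqrt (u ⬝ᵥ u) * Real.sqrt (v ⬝ᵥ v) := by
  have h := Finset.sum_mul_sq_le_sq_mul_sq Finset.univ u v
  have hu : (0:ℝ) ≤ u ⬝ᵥ u := aux_dot_nonneg u
  have huv : (u ⬝ᵥ v) ^ 2 ≤ (u ⬝ᵥ u) * (v ⬝ᵥ v) := by
    simpa [dotProduct, pow_two] using h
  calc u ⬝ᵥ v ≤ |u ⬝ᵥ v| := le_abs_self _
    _ = Real.sqrt ((u ⬝ᵥ v) ^ 2) := (Real.sqrt_sq_eq_abs _).symm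
    _ ≤ Real.sqrt ((u ⬝ᵥ u) * (v ⬝ᵥ v)) := Real.sqrt_le_sqrt huv
    _ = Real.sqrt (u ⬝ᵥ u) * Real.sqrt (v ⬝ᵥ v) := Real.sqrt_mul hu _

/-- Triangle inequality for the Euclidean (dot-product) norm. -/
lemma aux_tri (u v : Fin N → ℝ) :
    Real.sqrt ((u + v) ⬝ᵥ (u + v)) ≤ Real.sqrt (u ⬝ᵥ u) + Real.sqrt (v ⬝ᵥ v) := by
  have hu := aux_dot_nonneg u
  have hv := aux_dot_nonneg v
  have hcs := aux_cs u v
  have hexp : (u + v) ⬝ᵥ (u + v) = u ⬝ᵥ u + 2 * (u ⬝ᵥ v) + v ⬝ᵥ v := by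
    rw [add_dotProduct, dotProduct_add, dotProduct_add,
      dotProduct_comm v u]
    ring
  have hb : (u + v) ⬝ᵥ (u + v) ≤ (Real.sqrt (u ⬝ᵥ u) + Real.sqrt (v ⬝ᵥ v)) ^ 2 := by
    rw [hexp, add_sq, Real.sq_sqrt hu, Real.sq_sqrt hv]
    nlinarith [hcs]
  calc Real.sqrt ((u + v) ⬝ᵥ (u + v))
      ≤ Real.sqrt ((Real.sqrt (u ⬝ᵥ u) + Real.sqrt (v ⬝ᵥ v)) ^ 2) := Real.sqrt_le_sqrt hb
    _ = Real.sqrt (u ⬝ᵥ u) + Real.sqrt (v ⬝ᵥ v) := by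
        rw [Real.sqrt_sq (by positivity)]

end Aux

/-- Relative a posteriori error bound
‖a − a^𝒩‖_W / ‖a‖_W ≤ 2 ‖r‖_{W⁻¹} / (α ‖a^𝒩‖_W), provided ‖r‖_{W⁻¹}/α ≤ ‖a^𝒩‖_W/2. -/
theorem relative_a_posteriori_error_bound
    (N : ℕ) (W K : Matrix (Fin N) (Fin N) ℝ) (hW : W.PosDef) (hK : K.PosDef)
    (a aN f : Fin N → ℝ) (ha : K *ᵥ a = f) (haN : aN ≠ 0)
    (r : Fin N → ℝ) (hr : r = f - K *ᵥ aN)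
    (α : ℝ) (hα : 0 < α)
    (hmem : ∃ v : Fin N → ℝ, v ≠ 0 ∧ K *ᵥ v = α • (W *ᵥ v))
    (hmin : ∀ (μ : ℝ) (v : Fin N → ℝ), v ≠ 0 → K *ᵥ v = μ • (W *ᵥ v) → α ≤ μ)
    (hclose : Real.sqrt (r ⬝ᵥ W⁻¹ *ᵥ r) / α ≤ Real.sqrt (aN ⬝ᵥ W *ᵥ aN) / 2) :
    Real.sqrt ((a - aN) ⬝ᵥ W *ᵥ (a - aN)) / Real.sqrt (a ⬝ᵥ W *ᵥ a)
      ≤ 2 * Real.sqrt (r ⬝ᵥ W⁻¹ *ᵥ r) / (α * Real.sqrt (aN ⬝ᵥ W *ᵥ aN)) := by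
  classical
  have hWps := hW.posSemidef
  open scoped MatrixOrder in
  set S := CFC.sqrt W with hSdef
  open scoped MatrixOrder in
  have hSherm : S.IsHermitian := (CFC.sqrt_nonneg W).posSemidef.1
  open scoped MatrixOrder in
  have hSS : S * S = W := CFC.sqrt_mul_sqrt_self W hWps.nonneg
  have hSdet : IsUnit S.det := by
    refine isUnit_iff_ne_zero.mpr ?_
    intro h
    have hz : W.det = 0 := by rw [← hSS, Matrix.det_mul, h, zero_mul]
    exact hW.det_pos.ne' hz
  have hS1 : S * S⁻¹ = 1 := Matrix.mul_nonsing_inv S hSdet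
  have hS1' : S⁻¹ * S = 1 := Matrix.nonsing_inv_mul S hSdet
  have hSiherm : (S⁻¹).IsHermitian := hSherm.inv
  have hST : Sᵀ = S := by
    rw [← Matrix.conjTranspose_eq_transpose_of_trivial]; exact hSherm
  have hSiT : (S⁻¹)ᵀ = S⁻¹ := by
    rw [← Matrix.conjTranspose_eq_transpose_of_trivial]; exact hSiherm
  have hWinv : W⁻¹ = S⁻¹ * S⁻¹ := by rw [← hSS, Matrix.mul_inv_rev]
  -- dot product shuffle
  have hshuf : ∀ (T : Matrix (Fin N) (Fin N) ℝ), Tᵀ = T → ∀ (x z : Fin N → ℝ),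
      x ⬝ᵥ (T *ᵥ z) = (T *ᵥ x) ⬝ᵥ z := by
    intro T hT x z
    rw [Matrix.dotProduct_mulVec, ← Matrix.mulVec_transpose, hT]
  have quadW : ∀ x : Fin N → ℝ, x ⬝ᵥ W *ᵥ x = (S *ᵥ x) ⬝ᵥ (S *ᵥ x) := by
    intro x
    rw [← hSS, ← Matrix.mulVec_mulVec, hshuf S hST]
  have quadWinv : ∀ x : Fin N → ℝ, x ⬝ᵥ W⁻¹ *ᵥ x = (S⁻¹ *ᵥ x) ⬝ᵥ (S⁻¹ *ᵥ x) := by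
    intro x
    rw [hWinv, ← Matrix.mulVec_mulVec, hshuf S⁻¹ hSiT]
  -- the symmetric matrix M = S⁻¹ K S⁻¹
  set M : Matrix (Fin N) (Fin N) ℝ := S⁻¹ * K * S⁻¹ with hMdef
  have hKherm : Kᴴ = K := hK.1
  have hMherm : M.IsHermitian := by
    show Mᴴ = M
    rw [hMdef, Matrix.conjTranspose_mul, Matrix.conjTranspose_mul, hSiherm.eq, hKherm]
    rw [Matrix.mul_assoc]
  have hSMS : S * M * S = K := by
    rw [hMdef, ← Matrix.mul_assoc, ← Matrix.mul_assoc, hS1, Matrix.one_mul,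
      Matrix.mul_assoc, hS1', Matrix.mul_one]
  have hSM : S * M = K * S⁻¹ := by
    rw [hMdef, ← Matrix.mul_assoc, ← Matrix.mul_assoc, hS1, Matrix.one_mul]
  have hM'herm : (M - α • (1 : Matrix (Fin N) (Fin N) ℝ)).IsHermitian := by
    refine hMherm.sub ?_
    show (α • (1 : Matrix (Fin N) (Fin N) ℝ))ᴴ = _
    simp
  -- all eigenvalues of M - α•1 are nonnegative
  have hM'psd : (M - α • (1 : Matrix (Fin N) (Fin N) ℝ)).PosSemidef := by
    refine hM'herm.posSemidef_iff_eigenvalues_nonneg.mpr fun i => (?_ : (0:ℝ) ≤ _)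
    set μ := hM'herm.eigenvalues i with hμdef
    have hu : (M - α • 1) *ᵥ ⇑(hM'herm.eigenvectorBasis i) = μ • ⇑(hM'herm.eigenvectorBasis i) :=
      hM'herm.mulVec_eigenvectorBasis i
    set u : Fin N → ℝ := ⇑(hM'herm.eigenvectorBasis i) with hudef
    have hune : u ≠ 0 := by
      intro h
      have h0 : hM'herm.eigenvectorBasis i ≠ 0 :=
        hM'herm.eigenvectorBasis.orthonormal.ne_zero i
      apply h0
      ext j
      exact congrFun h j
    have hMu : M *ᵥ u = (μ + α) • u := by
      have h2 : M *ᵥ u - (α • (1 : Matrix (Fin N) (Fin N) ℝ)) *ᵥ u = μ • u := by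
        rwa [Matrix.sub_mulVec] at hu
      have h3 : (α • (1 : Matrix (Fin N) (Fin N) ℝ)) *ᵥ u = α • u := by
        rw [Matrix.smul_mulVec, Matrix.one_mulVec]
      rw [h3] at h2
      have := sub_eq_iff_eq_add.mp h2
      rw [this, add_smul]
    set v : Fin N → ℝ := S⁻¹ *ᵥ u with hvdef
    have hSv : S *ᵥ v = u := by
      rw [hvdef, Matrix.mulVec_mulVec, hS1, Matrix.one_mulVec]
    have hvne : v ≠ 0 := by
      intro h
      apply hune
      rw [← hSv, h, Matrix.mulVec_zero]
    have hWv : W *ᵥ v = S *ᵥ u := by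
      rw [← hSS, ← Matrix.mulVec_mulVec, hSv]
    have hKv : K *ᵥ v = (μ + α) • (W *ᵥ v) := by
      have h4 : K *ᵥ v = (K * S⁻¹) *ᵥ u := by rw [hvdef, Matrix.mulVec_mulVec]
      rw [h4, ← hSM, ← Matrix.mulVec_mulVec, hMu, Matrix.mulVec_smul, hWv]
    have := hmin (μ + α) v hvne hKv
    linarith
  -- coercivity
  have coer : ∀ x : Fin N → ℝ, α * (x ⬝ᵥ W *ᵥ x) ≤ x ⬝ᵥ K *ᵥ x := by
    intro x
    have h0 : 0 ≤ (S *ᵥ x) ⬝ᵥ ((M - α • 1) *ᵥ (S *ᵥ x)) := by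
      simpa using hM'psd.dotProduct_mulVec_nonneg (S *ᵥ x)
    have h1 : (S *ᵥ x) ⬝ᵥ (M *ᵥ (S *ᵥ x)) = x ⬝ᵥ K *ᵥ x := by
      rw [Matrix.mulVec_mulVec, ← hshuf S hST, Matrix.mulVec_mulVec, ← Matrix.mul_assoc, hSMS]
    have h2 : (S *ᵥ x) ⬝ᵥ ((M - α • 1) *ᵥ (S *ᵥ x))
        = x ⬝ᵥ K *ᵥ x - α * (x ⬝ᵥ W *ᵥ x) := by
      rw [Matrix.sub_mulVec, dotProduct_sub, h1, Matrix.smul_mulVec,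
        Matrix.one_mulVec, dotProduct_smul, quadW x, smul_eq_mul]
    linarith [h0, h2.symm.le, h2.le]
  -- error vector
  set e : Fin N → ℝ := a - aN with hedef
  have hKe : K *ᵥ e = r := by
    rw [hedef, Matrix.mulVec_sub, ha, hr]
  set E := Real.sqrt (e ⬝ᵥ W *ᵥ e) with hEdef
  set ρ := Real.sqrt (r ⬝ᵥ W⁻¹ *ᵥ r) with hρdef
  set B := Real.sqrt (aN ⬝ᵥ W *ᵥ aN) with hBdef
  set A := Real.sqrt (a ⬝ᵥ W *ᵥ a) with hAdef
  have hEsq : E ^ 2 = e ⬝ᵥ W *ᵥ e := by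
    rw [hEdef, Real.sq_sqrt]; rw [quadW]; exact aux_dot_nonneg _
  have hρsq : ρ ^ 2 = r ⬝ᵥ W⁻¹ *ᵥ r := by
    rw [hρdef, Real.sq_sqrt]; rw [quadWinv]; exact aux_dot_nonneg _
  have hEnn : 0 ≤ E := Real.sqrt_nonneg _
  have hρnn : 0 ≤ ρ := Real.sqrt_nonneg _
  have hAnn : 0 ≤ A := Real.sqrt_nonneg _
  -- |e ⬝ᵥ r| ≤ E * ρ (Cauchy-Schwarz through S)
  have hcs : e ⬝ᵥ K *ᵥ e ≤ E * ρ := by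
    have h1 : e ⬝ᵥ K *ᵥ e = (S *ᵥ e) ⬝ᵥ (S⁻¹ *ᵥ r) := by
      rw [hKe, ← hshuf S hST e (S⁻¹ *ᵥ r), Matrix.mulVec_mulVec, hS1, Matrix.one_mulVec]
    have h2 := aux_cs (S *ᵥ e) (S⁻¹ *ᵥ r)
    rw [h1]
    calc (S *ᵥ e) ⬝ᵥ (S⁻¹ *ᵥ r)
        ≤ Real.sqrt ((S *ᵥ e) ⬝ᵥ (S *ᵥ e)) * Real.sqrt ((S⁻¹ *ᵥ r) ⬝ᵥ (S⁻¹ *ᵥ r)) := h2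
      _ = E * ρ := by rw [hEdef, hρdef, quadW, quadWinv]
  -- absolute error bound : α * E ≤ ρ
  have habs : α * E ≤ ρ := by
    have h1 : α * E ^ 2 ≤ E * ρ := by
      calc α * E ^ 2 = α * (e ⬝ᵥ W *ᵥ e) := by rw [hEsq]
        _ ≤ e ⬝ᵥ K *ᵥ e := coer e
        _ ≤ E * ρ := hcs
    rcases eq_or_lt_of_le hEnn with hE0 | hEpos
    · rw [← hE0, mul_zero]; exact hρnn
    · nlinarith [h1, hEpos]
  -- B > 0
  have hBpos : 0 < B := by
    rw [hBdef]
    exact Real.sqrt_pos.mpr (by simpa using hW.dotProduct_mulVec_pos haN)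
  -- triangle : B ≤ A + E
  have htri : B ≤ A + E := by
    have hSaN : S *ᵥ aN = S *ᵥ a + -(S *ᵥ e) := by
      rw [hedef, Matrix.mulVec_sub]; abel
    have h1 := aux_tri (S *ᵥ a) (-(S *ᵥ e))
    have h2 : (-(S *ᵥ e)) ⬝ᵥ (-(S *ᵥ e)) = (S *ᵥ e) ⬝ᵥ (S *ᵥ e) := by
      rw [neg_dotProduct, dotProduct_neg, neg_neg]
    rw [h2, ← hSaN] at h1
    calc B = Real.sqrt ((S *ᵥ aN) ⬝ᵥ (S *ᵥ aN)) := by rw [hBdef, quadW]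
      _ ≤ Real.sqrt ((S *ᵥ a) ⬝ᵥ (S *ᵥ a)) + Real.sqrt ((S *ᵥ e) ⬝ᵥ (S *ᵥ e)) := h1
      _ = A + E := by rw [hAdef, hEdef, quadW, quadW]
  -- E ≤ B / 2 and A ≥ B / 2
  have hEB : E ≤ B / 2 := by
    have : E ≤ ρ / α := by
      rw [le_div_iff₀ hα]; linarith [habs]
    linarith [this, hclose]
  have hAB : B / 2 ≤ A := by linarith [htri, hEB]
  have hApos : 0 < A := lt_of_lt_of_le (by linarith [hBpos]) hAB
  -- conclude
  rw [div_le_div_iff₀ hApos (by positivity)]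
  nlinarith [mul_le_mul_of_nonneg_right habs hBpos.le,
    mul_le_mul_of_nonneg_left (by linarith [hAB] : B ≤ 2 * A) hρnn]
end
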